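/- arXiv:2510.08250 — 4 statements merged into one kernel-verified Lean document; each statement's English description precedes it below -/
import Mathlib

section
/- Let S be a 2-dimensional complex vector space. For matrices p ∈ End(S) and q ∈ End(S) with det(q) = 0, every polynomial in the entries of p and q that is invariant under simultaneous conjugation by GL(S) is a polynomial in det(p), Tr(p), Tr(q), and Tr(pq). -/
open MvPolynomial Matrix

private lemma eval_bind1 {σ τ : Type*} (x : τ → ℂ) (g : σ → MvPolynomial τ ℂ)
    (φ : MvPolynomial σ ℂ) :
    eval x (bind₁ g φ) = eval (fun i => eval x (g i)) φ :=
  eval₂Hom_bind₁ (RingHom.id ℂ) x g φ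

private lemma rank_one_decomp (q : Matrix (Fin 2) (Fin 2) ℂ) (h : q.det = 0) :
    ∃ v w : Fin 2 → ℂ, q = vecMulVec v w := by
  rw [Matrix.det_fin_two] at h
  by_cases h00 : q 0 0 ≠ 0
  · refine ⟨![q 0 0, q 1 0], ![1, q 0 1 / q 0 0], ?_⟩
    ext i j; fin_cases i <;> fin_cases j
    · simp [vecMulVec_apply]
    · simp [vecMulVec_apply]; field_simp
    · simp [vecMulVec_apply]
    · simp [vecMulVec_apply]; field_simp; linear_combination h
  · push_neg at h00
    by_cases h01 : q 0 1 ≠ 0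
    · have h10 : q 1 0 = 0 := by
        have := h; rw [h00] at this; simpa [h01] using this.symm
      refine ⟨![q 0 1, q 1 1], ![0, 1], ?_⟩
      ext i j; fin_cases i <;> fin_cases j <;> simp [vecMulVec_apply, h00, h10]
    · push_neg at h01
      refine ⟨![0, 1], ![q 1 0, q 1 1], ?_⟩
      ext i j; fin_cases i <;> fin_cases j <;> simp [vecMulVec_apply, h00, h01]

/-- index type for the 8 parameters (entries of p, v, w) -/
private abbrev S8 : Type := (Fin 2 × Fin 2) ⊕ (Fin 2 ⊕ Fin 2)

/-- substitution defining `Q`: entries of the normal forms as polys in the invariants -/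
private noncomputable def subN : ((Fin 2 × Fin 2) ⊕ (Fin 2 × Fin 2)) → MvPolynomial (Fin 4) ℂ :=
  Sum.elim
    (fun ij => (!![0, -X 0; 1, X 1] : Matrix (Fin 2) (Fin 2) (MvPolynomial (Fin 4) ℂ)) ij.1 ij.2)
    (fun ij => (!![X 2, X 3; 0, 0] : Matrix (Fin 2) (Fin 2) (MvPolynomial (Fin 4) ℂ)) ij.1 ij.2)

/-- substitution giving the entries of `(p, v wᵀ)` as polynomials in the 8 parameters -/
private noncomputable def subE : ((Fin 2 × Fin 2) ⊕ (Fin 2 × Fin 2)) → MvPolynomial S8 ℂ :=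
  Sum.elim (fun ij => X (Sum.inl ij))
    (fun ij => X (Sum.inr (Sum.inl ij.1)) * X (Sum.inr (Sum.inr ij.2)))

/-- substitution giving the four invariants as polynomials in the 8 parameters -/
private noncomputable def subI : Fin 4 → MvPolynomial S8 ℂ :=
  ![X (Sum.inl (0,0)) * X (Sum.inl (1,1)) - X (Sum.inl (0,1)) * X (Sum.inl (1,0)),
    X (Sum.inl (0,0)) + X (Sum.inl (1,1)),
    X (Sum.inr (Sum.inl 0)) * X (Sum.inr (Sum.inr 0)) +
      X (Sum.inr (Sum.inl 1)) * X (Sum.inr (Sum.inr 1)),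
    (X (Sum.inl (0,0)) * X (Sum.inr (Sum.inl 0)) + X (Sum.inl (0,1)) * X (Sum.inr (Sum.inl 1))) *
        X (Sum.inr (Sum.inr 0)) +
      (X (Sum.inl (1,0)) * X (Sum.inr (Sum.inl 0)) + X (Sum.inl (1,1)) * X (Sum.inr (Sum.inl 1))) *
        X (Sum.inr (Sum.inr 1))]

/-- the genericity polynomial `det [v, pv]` -/
private noncomputable def Hpoly : MvPolynomial S8 ℂ :=
  X (Sum.inr (Sum.inl 0)) *
      (X (Sum.inl (1,0)) * X (Sum.inr (Sum.inl 0)) + X (Sum.inl (1,1)) * X (Sum.inr (Sum.inl 1))) -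
    X (Sum.inr (Sum.inl 1)) *
      (X (Sum.inl (0,0)) * X (Sum.inr (Sum.inl 0)) + X (Sum.inl (0,1)) * X (Sum.inr (Sum.inl 1)))

private def packE (p : Matrix (Fin 2) (Fin 2) ℂ) (v w : Fin 2 → ℂ) : S8 → ℂ :=
  Sum.elim (fun ij => p ij.1 ij.2) (Sum.elim v w)

private lemma eval_Hpoly (p : Matrix (Fin 2) (Fin 2) ℂ) (v w : Fin 2 → ℂ) :
    eval (packE p v w) Hpoly =
      v 0 * (p 1 0 * v 0 + p 1 1 * v 1) - v 1 * (p 0 0 * v 0 + p 0 1 * v 1) := by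
  simp [Hpoly, packE]

private lemma Hpoly_ne_zero : Hpoly ≠ 0 := by
  intro hc
  have h2 := congrArg (eval (packE !![0,0;1,0] ![1,0] ![0,0])) hc
  rw [eval_Hpoly, map_zero] at h2
  norm_num at h2

private lemma eval_packE_subE (p : Matrix (Fin 2) (Fin 2) ℂ) (v w : Fin 2 → ℂ) :
    (fun i => eval (packE p v w) (subE i)) =
      Sum.elim (fun ij => p ij.1 ij.2) (fun ij => vecMulVec v w ij.1 ij.2) := by
  funext i
  rcases i with ⟨i, j⟩ | ⟨i, j⟩ <;> simp [subE, packE, vecMulVec_apply]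

private lemma eval_packE_subI (p : Matrix (Fin 2) (Fin 2) ℂ) (v w : Fin 2 → ℂ) :
    (fun i => eval (packE p v w) (subI i)) =
      ![p.det, p.trace, (vecMulVec v w).trace, (p * vecMulVec v w).trace] := by
  funext i
  fin_cases i <;>
    simp [subI, packE, Matrix.det_fin_two, Matrix.trace_fin_two, Matrix.mul_apply,
      Fin.sum_univ_two, vecMulVec_apply] <;> ring

private lemma eval_y_subN (y : Fin 4 → ℂ) :
    (fun i => eval y (subN i)) =
      Sum.elim
        (fun ij => (!![0, -(y 0); 1, y 1] : Matrix (Fin 2) (Fin 2) ℂ) ij.1 ij.2)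
        (fun ij => (!![y 2, y 3; 0, 0] : Matrix (Fin 2) (Fin 2) ℂ) ij.1 ij.2) := by
  funext i
  rcases i with ⟨i, j⟩ | ⟨i, j⟩ <;> fin_cases i <;> fin_cases j <;> simp [subN]

/-- For 2×2 complex matrices `p`, `q`, every polynomial function of the
entries of `(p, q)` invariant under simultaneous conjugation by `GL₂(ℂ)` is, on the
locus `det q = 0`, a polynomial in `det p`, `Tr p`, `Tr q` and `Tr (p*q)`. -/
theorem stmt0
    (f : Matrix (Fin 2) (Fin 2) ℂ → Matrix (Fin 2) (Fin 2) ℂ → ℂ)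
    (hpoly : ∃ P : MvPolynomial ((Fin 2 × Fin 2) ⊕ (Fin 2 × Fin 2)) ℂ,
      ∀ p q, f p q =
        MvPolynomial.eval (Sum.elim (fun ij => p ij.1 ij.2) (fun ij => q ij.1 ij.2)) P)
    (hinv : ∀ g : Matrix.GeneralLinearGroup (Fin 2) ℂ, ∀ p q,
      f ((↑g : Matrix (Fin 2) (Fin 2) ℂ) * p * (↑g⁻¹ : Matrix (Fin 2) (Fin 2) ℂ))
        ((↑g : Matrix (Fin 2) (Fin 2) ℂ) * q * (↑g⁻¹ : Matrix (Fin 2) (Fin 2) ℂ)) = f p q) :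
    ∃ Q : MvPolynomial (Fin 4) ℂ, ∀ p q : Matrix (Fin 2) (Fin 2) ℂ, q.det = 0 →
      f p q = MvPolynomial.eval ![p.det, p.trace, q.trace, (p * q).trace] Q := by
  classical
  obtain ⟨P, hP⟩ := hpoly
  refine ⟨bind₁ subN P, ?_⟩
  set Q : MvPolynomial (Fin 4) ℂ := bind₁ subN P with hQ
  -- KEY GEOMETRIC LEMMA
  have key : ∀ (p : Matrix (Fin 2) (Fin 2) ℂ) (v w : Fin 2 → ℂ),
      v 0 * (p 1 0 * v 0 + p 1 1 * v 1) - v 1 * (p 0 0 * v 0 + p 0 1 * v 1) ≠ 0 →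
      f p (vecMulVec v w) = eval
        ![p.det, p.trace, (vecMulVec v w).trace, (p * vecMulVec v w).trace] Q := by
    intro p v w hh
    set q : Matrix (Fin 2) (Fin 2) ℂ := vecMulVec v w with hq
    set p₀ : Matrix (Fin 2) (Fin 2) ℂ := !![0, -p.det; 1, p.trace] with hp₀
    set q₀ : Matrix (Fin 2) (Fin 2) ℂ := !![q.trace, (p * q).trace; 0, 0] with hq₀
    set g : Matrix (Fin 2) (Fin 2) ℂ :=
      !![v 0, p 0 0 * v 0 + p 0 1 * v 1; v 1, p 1 0 * v 0 + p 1 1 * v 1] with hg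
    have hdet : g.det ≠ 0 := by
      rw [hg, Matrix.det_fin_two_of]
      intro hc; exact hh (by linear_combination hc)
    have hU : IsUnit g.det := isUnit_iff_ne_zero.mpr hdet
    let G : Matrix.GeneralLinearGroup (Fin 2) ℂ := Matrix.nonsingInvUnit g hU
    have h1 : g * p₀ = p * g := by
      ext i j
      fin_cases i <;> fin_cases j <;>
        simp [hg, hp₀, Matrix.mul_apply, Fin.sum_univ_two, Matrix.det_fin_two,
          Matrix.trace_fin_two] <;> ring
    have h2 : g * q₀ = q * g := by
      ext i j
      fin_cases i <;> fin_cases j <;>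
        simp [hg, hq₀, hq, Matrix.mul_apply, Fin.sum_univ_two, Matrix.trace_fin_two,
          vecMulVec_apply] <;> ring
    have hp : (↑G : Matrix (Fin 2) (Fin 2) ℂ) * p₀ * (↑G⁻¹ : Matrix (Fin 2) (Fin 2) ℂ) = p := by
      show g * p₀ * g⁻¹ = p
      rw [h1, Matrix.mul_assoc, Matrix.mul_nonsing_inv g hU, Matrix.mul_one]
    have hqc : (↑G : Matrix (Fin 2) (Fin 2) ℂ) * q₀ * (↑G⁻¹ : Matrix (Fin 2) (Fin 2) ℂ) = q := by
      show g * q₀ * g⁻¹ = q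
      rw [h2, Matrix.mul_assoc, Matrix.mul_nonsing_inv g hU, Matrix.mul_one]
    have hconj := hinv G p₀ q₀
    rw [hp, hqc] at hconj
    rw [hconj, hP p₀ q₀, hQ, eval_bind1, eval_y_subN]
    have hM1 : (!![0, -(![p.det, p.trace, q.trace, (p * q).trace] 0);
        1, ![p.det, p.trace, q.trace, (p * q).trace] 1] : Matrix (Fin 2) (Fin 2) ℂ) = p₀ := by
      rw [hp₀]; norm_num
    have hM2 : (!![![p.det, p.trace, q.trace, (p * q).trace] 2,
        ![p.det, p.trace, q.trace, (p * q).trace] 3; 0, 0] : Matrix (Fin 2) (Fin 2) ℂ) = q₀ := by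
      rw [hq₀]; norm_num; exact ⟨rfl, rfl⟩
    rw [hM1, hM2]
  -- polynomial identity on the 8-dimensional parameter space
  have evalL : ∀ (p : Matrix (Fin 2) (Fin 2) ℂ) (v w : Fin 2 → ℂ),
      eval (packE p v w) (bind₁ subE P) = f p (vecMulVec v w) := by
    intro p v w
    rw [eval_bind1, eval_packE_subE, ← hP]
  have evalR : ∀ (p : Matrix (Fin 2) (Fin 2) ℂ) (v w : Fin 2 → ℂ),
      eval (packE p v w) (bind₁ subI Q) =
        eval ![p.det, p.trace, (vecMulVec v w).trace, (p * vecMulVec v w).trace] Q := by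
    intro p v w
    rw [eval_bind1, eval_packE_subI]
  have hLR : bind₁ subE P = bind₁ subI Q := by
    have hz : (bind₁ subE P - bind₁ subI Q) * Hpoly = 0 := by
      apply MvPolynomial.funext
      intro x
      rw [_root_.map_mul, _root_.map_sub, map_zero]
      have hxform : x = packE (Matrix.of fun i j => x (Sum.inl (i, j)))
          (fun i => x (Sum.inr (Sum.inl i))) (fun i => x (Sum.inr (Sum.inr i))) := by
        funext i; rcases i with ⟨i, j⟩ | i | i <;> rfl
      by_cases hx : eval x Hpoly = 0
      · rw [hx, mul_zero]
      · rw [hxform] at hx ⊢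
        rw [eval_Hpoly] at hx
        rw [evalL, evalR, key _ _ _ (by simpa using hx), sub_self, zero_mul]
    rcases mul_eq_zero.mp hz with h | h
    · exact sub_eq_zero.mp h
    · exact absurd h Hpoly_ne_zero
  -- conclude
  intro p q hdq
  obtain ⟨v, w, rfl⟩ := rank_one_decomp q hdq
  rw [← evalL p v w, hLR, evalR p v w]
end

section
/- Let S₁, S₂ be 2-dimensional complex vector spaces. Under a suitable (sign-correct) identification of End₀(S₁) ⊕ End₀(S₂) with Λ²Hom(S₂,S₁) twisted by (det S₁)⁻¹(det S₂), the locus {(p₁, p₂, a) : a p₂ = p₁ a and det(p₁) = det(p₂)} in (End₀(S₁) ⊕ End₀(S₂)) × Hom(S₂,S₁) corresponds to the locus {(p, a) ∈ Λ²H × H : p ∧ p = 0 and p ∧ a = 0} where H = Hom(S₂,S₁). -/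
open ExteriorAlgebra

/-- Traceless 2×2 complex matrices, modelling `End₀(Sᵢ)`. -/
noncomputable def sl2C : Submodule ℂ (Matrix (Fin 2) (Fin 2) ℂ) :=
  LinearMap.ker (Matrix.traceLinearMap (Fin 2) ℂ ℂ)

abbrev M2 : Type := Matrix (Fin 2) (Fin 2) ℂ
variable (x y z w : M2)
noncomputable abbrev ej (m : M2) := ι ℂ m

lemma swap : ej x * ej y = -(ej y * ej x) := by
  have := ι_add_mul_swap (R := ℂ) x y
  linear_combination (norm := noncomm_ring) this

lemma swap3 (t : ExteriorAlgebra ℂ M2) : ej x * (ej y * t) = -(ej y * (ej x * t)) := by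
  rw [← mul_assoc, swap, neg_mul, mul_assoc]

lemma sqz (t : ExteriorAlgebra ℂ M2) : ej x * (ej x * t) = 0 := by
  rw [← mul_assoc, ι_sq_zero, zero_mul]

-- triple lemmas (LHS in (a*b)*c form)
lemma t2 : (ej x * ej z) * ej y = -(ej x * (ej y * ej z)) := by
  rw [mul_assoc, swap z y]; noncomm_ring
lemma t3 : (ej y * ej z) * ej x = ej x * (ej y * ej z) := by
  rw [mul_assoc, swap z x, mul_neg, ← mul_assoc, swap y x]; noncomm_ring
lemma tdup1 : (ej x * ej y) * ej x = 0 := by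
  rw [mul_assoc, swap y x, mul_neg, sqz]; simp
lemma tdup2 : (ej x * ej y) * ej y = 0 := by
  rw [mul_assoc, ι_sq_zero, mul_zero]

-- quadruple lemmas, LHS as (a*b)*(c*d)
lemma comm2 : (ej z * ej w) * (ej x * ej y) = (ej x * ej y) * (ej z * ej w) := by
  rw [mul_assoc, swap3 w x]
  simp only [mul_neg, neg_neg]
  rw [swap w y]
  simp only [mul_neg, neg_neg]
  rw [swap3 z x, swap3 z y]
  noncomm_ring
lemma q1 : (ej x * ej y) * (ej z * ej w) = ej x * (ej y * (ej z * ej w)) := by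
  rw [mul_assoc]
lemma q3 : (ej x * ej z) * (ej y * ej w) = -(ej x * (ej y * (ej z * ej w))) := by
  rw [mul_assoc, swap3 z y]; noncomm_ring
lemma q4 : (ej x * ej w) * (ej y * ej z) = ej x * (ej y * (ej z * ej w)) := by
  rw [mul_assoc, swap3 w y, swap w z]; noncomm_ring
lemma qdup13 : (ej x * ej y) * (ej x * ej z) = 0 := by
  rw [← mul_assoc, tdup1, zero_mul]
lemma qdup14 : (ej x * ej y) * (ej z * ej x) = 0 := by
  rw [mul_assoc, swap3 y z]
  simp only [mul_neg, neg_neg]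
  rw [swap y x]
  simp only [mul_neg, neg_neg]
  rw [swap3 z x]
  simp only [mul_neg, neg_neg]
  rw [sqz]
  simp
lemma qdup23 : (ej y * ej x) * (ej x * ej z) = 0 := by
  rw [mul_assoc, sqz, mul_zero]
lemma qdup24 : (ej y * ej x) * (ej z * ej x) = 0 := by
  rw [mul_assoc, swap3 x z]
  simp only [mul_neg, neg_neg]
  rw [ι_sq_zero]
  simp

noncomputable def coordEquiv : M2 ≃ₗ[ℂ] (Fin 4 → ℂ) where
  toFun m := ![m 0 0, m 0 1, m 1 0, m 1 1]
  invFun v := !![v 0, v 1; v 2, v 3]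
  map_add' x y := by funext i; fin_cases i <;> simp
  map_smul' c x := by funext i; fin_cases i <;> simp
  left_inv m := by ext i j; fin_cases i <;> fin_cases j <;> simp
  right_inv v := by funext i; fin_cases i <;> simp

noncomputable def bB : Module.Basis (Fin 4) ℂ M2 := Module.Basis.ofEquivFun coordEquiv

noncomputable def e₀ : (M2 × M2) →ₗ[ℂ] ExteriorAlgebra ℂ M2 where
  toFun P :=
    (P.1 0 1) • (ej (bB 0) * ej (bB 1)) + (P.2 1 0) • (ej (bB 0) * ej (bB 2)) +
    (-(P.1 0 0) - P.2 0 0) • (ej (bB 0) * ej (bB 3)) +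
    (P.1 0 0 - P.2 0 0) • (ej (bB 1) * ej (bB 2)) +
    (-(P.2 0 1)) • (ej (bB 1) * ej (bB 3)) + (-(P.1 1 0)) • (ej (bB 2) * ej (bB 3))
  map_add' P Q := by
    simp only [Prod.fst_add, Prod.snd_add, Matrix.add_apply]
    module
  map_smul' c P := by
    simp only [Prod.smul_fst, Prod.smul_snd, Matrix.smul_apply, smul_eq_mul, RingHom.id_apply]
    module

lemma mem2 (x y : M2) : ej x * ej y ∈ ⋀[ℂ]^2 M2 := by
  have h : (⋀[ℂ]^2 M2 : Submodule ℂ (ExteriorAlgebra ℂ M2)) =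
      LinearMap.range (ι ℂ : M2 →ₗ[ℂ] ExteriorAlgebra ℂ M2) *
      LinearMap.range (ι ℂ : M2 →ₗ[ℂ] ExteriorAlgebra ℂ M2) := by
    rw [exteriorPower, pow_two]
  rw [h]
  exact Submodule.mul_mem_mul (LinearMap.mem_range_self _ x) (LinearMap.mem_range_self _ y)

lemma e₀_mem (P : M2 × M2) : e₀ P ∈ ⋀[ℂ]^2 M2 := by
  refine Submodule.add_mem _ (Submodule.add_mem _ (Submodule.add_mem _ (Submodule.add_mem _
    (Submodule.add_mem _ ?_ ?_) ?_) ?_) ?_) ?_ <;>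
  exact Submodule.smul_mem _ _ (mem2 _ _)

noncomputable def eHat : (M2 × M2) →ₗ[ℂ] (⋀[ℂ]^2 M2 : Submodule ℂ (ExteriorAlgebra ℂ M2)) :=
  e₀.codRestrict _ e₀_mem

noncomputable def eL : (sl2C × sl2C) →ₗ[ℂ] (⋀[ℂ]^2 M2 : Submodule ℂ (ExteriorAlgebra ℂ M2)) :=
  eHat.comp ((sl2C.subtype).prodMap (sl2C.subtype))

lemma eL_val (p₁ p₂ : sl2C) : ((eL (p₁, p₂) : (⋀[ℂ]^2 M2 : Submodule ℂ (ExteriorAlgebra ℂ M2))) :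
    ExteriorAlgebra ℂ M2) =
    ((p₁ : M2) 0 1) • (ej (bB 0) * ej (bB 1)) + ((p₂ : M2) 1 0) • (ej (bB 0) * ej (bB 2)) +
    (-((p₁ : M2) 0 0) - (p₂ : M2) 0 0) • (ej (bB 0) * ej (bB 3)) +
    ((p₁ : M2) 0 0 - (p₂ : M2) 0 0) • (ej (bB 1) * ej (bB 2)) +
    (-((p₂ : M2) 0 1)) • (ej (bB 1) * ej (bB 3)) + (-((p₁ : M2) 1 0)) • (ej (bB 2) * ej (bB 3)) :=
  rfl

lemma hb0 : bB 0 = !![1,0;0,0] := by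
  rw [show bB 0 = coordEquiv.symm (Pi.single 0 1) by rw [bB, Module.Basis.coe_ofEquivFun]]
  ext i j; fin_cases i <;> fin_cases j <;> simp [coordEquiv, Pi.single_apply]
lemma hb1 : bB 1 = !![0,1;0,0] := by
  rw [show bB 1 = coordEquiv.symm (Pi.single 1 1) by rw [bB, Module.Basis.coe_ofEquivFun]]
  ext i j; fin_cases i <;> fin_cases j <;> simp [coordEquiv, Pi.single_apply]
lemma hb2 : bB 2 = !![0,0;1,0] := by
  rw [show bB 2 = coordEquiv.symm (Pi.single 2 1) by rw [bB, Module.Basis.coe_ofEquivFun]]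
  ext i j; fin_cases i <;> fin_cases j <;> simp [coordEquiv, Pi.single_apply]
lemma hb3 : bB 3 = !![0,0;0,1] := by
  rw [show bB 3 = coordEquiv.symm (Pi.single 3 1) by rw [bB, Module.Basis.coe_ofEquivFun]]
  ext i j; fin_cases i <;> fin_cases j <;> simp [coordEquiv, Pi.single_apply]

lemma hexp (m : M2) : m = m 0 0 • bB 0 + m 0 1 • bB 1 + m 1 0 • bB 2 + m 1 1 • bB 3 := by
  ext i j
  fin_cases i <;> fin_cases j <;>
    simp [hb0, hb1, hb2, hb3]

lemma iota3 (x y z : M2) : ιMulti ℂ 3 ![x, y, z] = ej x * (ej y * ej z) := by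
  simp [ιMulti_apply, List.ofFn_succ]
lemma iota4 (x y z w : M2) : ιMulti ℂ 4 ![x, y, z, w] = ej x * (ej y * (ej z * ej w)) := by
  simp [ιMulti_apply, List.ofFn_succ]

noncomputable def fam3 (k : Fin 4) : ∀ i, M2 [⋀^Fin i]→ₗ[ℂ] ℂ := fun i =>
  match i with
  | 3 => (bB.det).curryLeft (bB k)
  | _ => 0
noncomputable def fam4 : ∀ i, M2 [⋀^Fin i]→ₗ[ℂ] ℂ := fun i =>
  match i with
  | 4 => bB.det
  | _ => 0

noncomputable def D3 (k : Fin 4) := liftAlternating (R := ℂ) (M := M2) (N := ℂ) (fam3 k)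
noncomputable def D4 := liftAlternating (R := ℂ) (M := M2) (N := ℂ) fam4

lemma D3_apply (k : Fin 4) (x y z : M2) :
    D3 k (ej x * (ej y * ej z)) = bB.det (Matrix.vecCons (bB k) ![x, y, z]) := by
  rw [← iota3, D3, liftAlternating_apply_ιMulti]
  rfl
lemma D4_apply (x y z w : M2) :
    D4 (ej x * (ej y * (ej z * ej w))) = bB.det ![x, y, z, w] := by
  rw [← iota4, D4, liftAlternating_apply_ιMulti]
  rfl

example : bB.det ![bB 3, bB 0, bB 1, bB 2] = -1 := by
  have hM : bB.toMatrix ![bB 3, bB 0, bB 1, bB 2] =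
      !![0,1,0,0; 0,0,1,0; 0,0,0,1; (1:ℂ),0,0,0] := by
    ext i j
    fin_cases i <;> fin_cases j <;>
      simp [Module.Basis.toMatrix_apply, Module.Basis.repr_self, Finsupp.single_apply, Matrix.vecHead,
        Matrix.vecTail]
  rw [Module.Basis.det_apply, hM]
  rw [Matrix.det_succ_row_zero]
  simp [Fin.sum_univ_succ, Matrix.det_fin_three, Fin.succAbove]
lemma detv_0_012 : bB.det ![bB 0, bB 0, bB 1, bB 2] = 0 := by
  have hM : bB.toMatrix ![bB 0, bB 0, bB 1, bB 2] = (!![(1:ℂ),1,0,0; 0,0,1,0; 0,0,0,1; 0,0,0,0] : Matrix (Fin 4) (Fin 4) ℂ) := by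
    ext i j
    fin_cases i <;> fin_cases j <;>
      simp [Module.Basis.toMatrix_apply, Module.Basis.repr_self, Finsupp.single_apply, Matrix.vecHead,
        Matrix.vecTail]
  rw [Module.Basis.det_apply, hM]
  rw [Matrix.det_succ_row_zero]
  simp [Fin.sum_univ_succ, Matrix.det_fin_three, Fin.succAbove]

lemma detv_0_013 : bB.det ![bB 0, bB 0, bB 1, bB 3] = 0 := by
  have hM : bB.toMatrix ![bB 0, bB 0, bB 1, bB 3] = (!![(1:ℂ),1,0,0; 0,0,1,0; 0,0,0,0; 0,0,0,1] : Matrix (Fin 4) (Fin 4) ℂ) := by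
    ext i j
    fin_cases i <;> fin_cases j <;>
      simp [Module.Basis.toMatrix_apply, Module.Basis.repr_self, Finsupp.single_apply, Matrix.vecHead,
        Matrix.vecTail]
  rw [Module.Basis.det_apply, hM]
  rw [Matrix.det_succ_row_zero]
  simp [Fin.sum_univ_succ, Matrix.det_fin_three, Fin.succAbove]

lemma detv_0_023 : bB.det ![bB 0, bB 0, bB 2, bB 3] = 0 := by
  have hM : bB.toMatrix ![bB 0, bB 0, bB 2, bB 3] = (!![(1:ℂ),1,0,0; 0,0,0,0; 0,0,1,0; 0,0,0,1] : Matrix (Fin 4) (Fin 4) ℂ) := by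
    ext i j
    fin_cases i <;> fin_cases j <;>
      simp [Module.Basis.toMatrix_apply, Module.Basis.repr_self, Finsupp.single_apply, Matrix.vecHead,
        Matrix.vecTail]
  rw [Module.Basis.det_apply, hM]
  rw [Matrix.det_succ_row_zero]
  simp [Fin.sum_univ_succ, Matrix.det_fin_three, Fin.succAbove]

lemma detv_0_123 : bB.det ![bB 0, bB 1, bB 2, bB 3] = 1 := by
  have hM : bB.toMatrix ![bB 0, bB 1, bB 2, bB 3] = (!![(1:ℂ),0,0,0; 0,1,0,0; 0,0,1,0; 0,0,0,1] : Matrix (Fin 4) (Fin 4) ℂ) := by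
    ext i j
    fin_cases i <;> fin_cases j <;>
      simp [Module.Basis.toMatrix_apply, Module.Basis.repr_self, Finsupp.single_apply, Matrix.vecHead,
        Matrix.vecTail]
  rw [Module.Basis.det_apply, hM]
  rw [Matrix.det_succ_row_zero]
  simp [Fin.sum_univ_succ, Matrix.det_fin_three, Fin.succAbove]

lemma detv_1_012 : bB.det ![bB 1, bB 0, bB 1, bB 2] = 0 := by
  have hM : bB.toMatrix ![bB 1, bB 0, bB 1, bB 2] = (!![0,1,0,0; 1,0,1,0; 0,0,0,1; 0,0,0,0] : Matrix (Fin 4) (Fin 4) ℂ) := by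
    ext i j
    fin_cases i <;> fin_cases j <;>
      simp [Module.Basis.toMatrix_apply, Module.Basis.repr_self, Finsupp.single_apply, Matrix.vecHead,
        Matrix.vecTail]
  rw [Module.Basis.det_apply, hM]
  rw [Matrix.det_succ_row_zero]
  simp [Fin.sum_univ_succ, Matrix.det_fin_three, Fin.succAbove]

lemma detv_1_013 : bB.det ![bB 1, bB 0, bB 1, bB 3] = 0 := by
  have hM : bB.toMatrix ![bB 1, bB 0, bB 1, bB 3] = (!![0,1,0,0; 1,0,1,0; 0,0,0,0; 0,0,0,1] : Matrix (Fin 4) (Fin 4) ℂ) := by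
    ext i j
    fin_cases i <;> fin_cases j <;>
      simp [Module.Basis.toMatrix_apply, Module.Basis.repr_self, Finsupp.single_apply, Matrix.vecHead,
        Matrix.vecTail]
  rw [Module.Basis.det_apply, hM]
  rw [Matrix.det_succ_row_zero]
  simp [Fin.sum_univ_succ, Matrix.det_fin_three, Fin.succAbove]

lemma detv_1_023 : bB.det ![bB 1, bB 0, bB 2, bB 3] = -1 := by
  have hM : bB.toMatrix ![bB 1, bB 0, bB 2, bB 3] = (!![0,1,0,0; 1,0,0,0; 0,0,1,0; 0,0,0,1] : Matrix (Fin 4) (Fin 4) ℂ) := by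
    ext i j
    fin_cases i <;> fin_cases j <;>
      simp [Module.Basis.toMatrix_apply, Module.Basis.repr_self, Finsupp.single_apply, Matrix.vecHead,
        Matrix.vecTail]
  rw [Module.Basis.det_apply, hM]
  rw [Matrix.det_succ_row_zero]
  simp [Fin.sum_univ_succ, Matrix.det_fin_three, Fin.succAbove]

lemma detv_1_123 : bB.det ![bB 1, bB 1, bB 2, bB 3] = 0 := by
  have hM : bB.toMatrix ![bB 1, bB 1, bB 2, bB 3] = (!![0,0,0,0; 1,1,0,0; 0,0,1,0; 0,0,0,1] : Matrix (Fin 4) (Fin 4) ℂ) := by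
    ext i j
    fin_cases i <;> fin_cases j <;>
      simp [Module.Basis.toMatrix_apply, Module.Basis.repr_self, Finsupp.single_apply, Matrix.vecHead,
        Matrix.vecTail]
  rw [Module.Basis.det_apply, hM]
  rw [Matrix.det_succ_row_zero]
  simp [Fin.sum_univ_succ, Matrix.det_fin_three, Fin.succAbove]

lemma detv_2_012 : bB.det ![bB 2, bB 0, bB 1, bB 2] = 0 := by
  have hM : bB.toMatrix ![bB 2, bB 0, bB 1, bB 2] = (!![0,1,0,0; 0,0,1,0; 1,0,0,1; 0,0,0,0] : Matrix (Fin 4) (Fin 4) ℂ) := by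
    ext i j
    fin_cases i <;> fin_cases j <;>
      simp [Module.Basis.toMatrix_apply, Module.Basis.repr_self, Finsupp.single_apply, Matrix.vecHead,
        Matrix.vecTail]
  rw [Module.Basis.det_apply, hM]
  rw [Matrix.det_succ_row_zero]
  simp [Fin.sum_univ_succ, Matrix.det_fin_three, Fin.succAbove]

lemma detv_2_013 : bB.det ![bB 2, bB 0, bB 1, bB 3] = 1 := by
  have hM : bB.toMatrix ![bB 2, bB 0, bB 1, bB 3] = (!![0,1,0,0; 0,0,1,0; 1,0,0,0; 0,0,0,1] : Matrix (Fin 4) (Fin 4) ℂ) := by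
    ext i j
    fin_cases i <;> fin_cases j <;>
      simp [Module.Basis.toMatrix_apply, Module.Basis.repr_self, Finsupp.single_apply, Matrix.vecHead,
        Matrix.vecTail]
  rw [Module.Basis.det_apply, hM]
  rw [Matrix.det_succ_row_zero]
  simp [Fin.sum_univ_succ, Matrix.det_fin_three, Fin.succAbove]

lemma detv_2_023 : bB.det ![bB 2, bB 0, bB 2, bB 3] = 0 := by
  have hM : bB.toMatrix ![bB 2, bB 0, bB 2, bB 3] = (!![0,1,0,0; 0,0,0,0; 1,0,1,0; 0,0,0,1] : Matrix (Fin 4) (Fin 4) ℂ) := by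
    ext i j
    fin_cases i <;> fin_cases j <;>
      simp [Module.Basis.toMatrix_apply, Module.Basis.repr_self, Finsupp.single_apply, Matrix.vecHead,
        Matrix.vecTail]
  rw [Module.Basis.det_apply, hM]
  rw [Matrix.det_succ_row_zero]
  simp [Fin.sum_univ_succ, Matrix.det_fin_three, Fin.succAbove]

lemma detv_2_123 : bB.det ![bB 2, bB 1, bB 2, bB 3] = 0 := by
  have hM : bB.toMatrix ![bB 2, bB 1, bB 2, bB 3] = (!![0,0,0,0; 0,1,0,0; 1,0,1,0; 0,0,0,1] : Matrix (Fin 4) (Fin 4) ℂ) := by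
    ext i j
    fin_cases i <;> fin_cases j <;>
      simp [Module.Basis.toMatrix_apply, Module.Basis.repr_self, Finsupp.single_apply, Matrix.vecHead,
        Matrix.vecTail]
  rw [Module.Basis.det_apply, hM]
  rw [Matrix.det_succ_row_zero]
  simp [Fin.sum_univ_succ, Matrix.det_fin_three, Fin.succAbove]

lemma detv_3_012 : bB.det ![bB 3, bB 0, bB 1, bB 2] = -1 := by
  have hM : bB.toMatrix ![bB 3, bB 0, bB 1, bB 2] = (!![0,1,0,0; 0,0,1,0; 0,0,0,1; 1,0,0,0] : Matrix (Fin 4) (Fin 4) ℂ) := by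
    ext i j
    fin_cases i <;> fin_cases j <;>
      simp [Module.Basis.toMatrix_apply, Module.Basis.repr_self, Finsupp.single_apply, Matrix.vecHead,
        Matrix.vecTail]
  rw [Module.Basis.det_apply, hM]
  rw [Matrix.det_succ_row_zero]
  simp [Fin.sum_univ_succ, Matrix.det_fin_three, Fin.succAbove]

lemma detv_3_013 : bB.det ![bB 3, bB 0, bB 1, bB 3] = 0 := by
  have hM : bB.toMatrix ![bB 3, bB 0, bB 1, bB 3] = (!![0,1,0,0; 0,0,1,0; 0,0,0,0; 1,0,0,1] : Matrix (Fin 4) (Fin 4) ℂ) := by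
    ext i j
    fin_cases i <;> fin_cases j <;>
      simp [Module.Basis.toMatrix_apply, Module.Basis.repr_self, Finsupp.single_apply, Matrix.vecHead,
        Matrix.vecTail]
  rw [Module.Basis.det_apply, hM]
  rw [Matrix.det_succ_row_zero]
  simp [Fin.sum_univ_succ, Matrix.det_fin_three, Fin.succAbove]

lemma detv_3_023 : bB.det ![bB 3, bB 0, bB 2, bB 3] = 0 := by
  have hM : bB.toMatrix ![bB 3, bB 0, bB 2, bB 3] = (!![0,1,0,0; 0,0,0,0; 0,0,1,0; 1,0,0,1] : Matrix (Fin 4) (Fin 4) ℂ) := by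
    ext i j
    fin_cases i <;> fin_cases j <;>
      simp [Module.Basis.toMatrix_apply, Module.Basis.repr_self, Finsupp.single_apply, Matrix.vecHead,
        Matrix.vecTail]
  rw [Module.Basis.det_apply, hM]
  rw [Matrix.det_succ_row_zero]
  simp [Fin.sum_univ_succ, Matrix.det_fin_three, Fin.succAbove]

lemma detv_3_123 : bB.det ![bB 3, bB 1, bB 2, bB 3] = 0 := by
  have hM : bB.toMatrix ![bB 3, bB 1, bB 2, bB 3] = (!![0,0,0,0; 0,1,0,0; 0,0,1,0; 1,0,0,1] : Matrix (Fin 4) (Fin 4) ℂ) := by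
    ext i j
    fin_cases i <;> fin_cases j <;>
      simp [Module.Basis.toMatrix_apply, Module.Basis.repr_self, Finsupp.single_apply, Matrix.vecHead,
        Matrix.vecTail]
  rw [Module.Basis.det_apply, hM]
  rw [Matrix.det_succ_row_zero]
  simp [Fin.sum_univ_succ, Matrix.det_fin_three, Fin.succAbove]

lemma Wne : ej (bB 0) * (ej (bB 1) * (ej (bB 2) * ej (bB 3))) ≠ 0 := by
  intro h
  have h4 := congrArg D4 h
  rw [D4_apply, detv_0_123, map_zero] at h4
  exact one_ne_zero h4

lemma indep3 (A B C D : ℂ)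
    (h : A • (ej (bB 0) * (ej (bB 1) * ej (bB 2))) + B • (ej (bB 0) * (ej (bB 1) * ej (bB 3))) +
      C • (ej (bB 0) * (ej (bB 2) * ej (bB 3))) + D • (ej (bB 1) * (ej (bB 2) * ej (bB 3))) = 0) :
    A = 0 ∧ B = 0 ∧ C = 0 ∧ D = 0 := by
  have h3 := congrArg (D3 3) h
  have h2 := congrArg (D3 2) h
  have h1 := congrArg (D3 1) h
  have h0 := congrArg (D3 0) h
  simp only [map_add, map_smul, map_zero, D3_apply, detv_0_012, detv_0_013, detv_0_023,
    detv_0_123, detv_1_012, detv_1_013, detv_1_023, detv_1_123, detv_2_012, detv_2_013,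
    detv_2_023, detv_2_123, detv_3_012, detv_3_013, detv_3_023, detv_3_123, smul_eq_mul,
    mul_one, mul_zero, mul_neg_one, add_zero, zero_add, smul_zero] at h3 h2 h1 h0
  refine ⟨by linear_combination -h3, by linear_combination h2, by linear_combination -h1,
    by linear_combination h0⟩

lemma key1 (p₁ p₂ : sl2C) :
    ((eL (p₁, p₂) : (⋀[ℂ]^2 M2 : Submodule ℂ (ExteriorAlgebra ℂ M2))) : ExteriorAlgebra ℂ M2) *
      ((eL (p₁, p₂) : (⋀[ℂ]^2 M2 : Submodule ℂ (ExteriorAlgebra ℂ M2))) : ExteriorAlgebra ℂ M2) =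
    (2 * ((p₂ : M2) 0 0 * (p₂ : M2) 0 0 + (p₂ : M2) 0 1 * (p₂ : M2) 1 0 -
      (p₁ : M2) 0 0 * (p₁ : M2) 0 0 - (p₁ : M2) 0 1 * (p₁ : M2) 1 0)) •
      (ej (bB 0) * (ej (bB 1) * (ej (bB 2) * ej (bB 3)))) := by
  rw [eL_val]
  simp only [mul_add, add_mul, smul_mul_assoc, mul_smul_comm, smul_smul]
  simp only [qdup13, qdup14, qdup23, qdup24, smul_zero, add_zero, zero_add]
  simp only [comm2 (bB 0) (bB 1) (bB 2) (bB 3), comm2 (bB 0) (bB 2) (bB 1) (bB 3),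
    comm2 (bB 0) (bB 3) (bB 1) (bB 2)]
  simp only [mul_assoc (ej (bB 0)) (ej (bB 1)) (ej (bB 2) * ej (bB 3)),
    q3 (bB 0) (bB 1) (bB 2) (bB 3), q4 (bB 0) (bB 1) (bB 2) (bB 3)]
  simp only [smul_neg]
  module

lemma key2 (p₁ p₂ : sl2C) (a : M2) :
    ((eL (p₁, p₂) : (⋀[ℂ]^2 M2 : Submodule ℂ (ExteriorAlgebra ℂ M2))) : ExteriorAlgebra ℂ M2) *
      ι ℂ a =
    ((p₁ : M2) 0 1 * a 1 0 - (p₂ : M2) 1 0 * a 0 1 +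
        ((p₁ : M2) 0 0 - (p₂ : M2) 0 0) * a 0 0) • (ej (bB 0) * (ej (bB 1) * ej (bB 2))) +
    ((p₁ : M2) 0 1 * a 1 1 - (-((p₁ : M2) 0 0) - (p₂ : M2) 0 0) * a 0 1 +
        (-((p₂ : M2) 0 1)) * a 0 0) • (ej (bB 0) * (ej (bB 1) * ej (bB 3))) +
    ((p₂ : M2) 1 0 * a 1 1 - (-((p₁ : M2) 0 0) - (p₂ : M2) 0 0) * a 1 0 +
        (-((p₁ : M2) 1 0)) * a 0 0) • (ej (bB 0) * (ej (bB 2) * ej (bB 3))) +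
    (((p₁ : M2) 0 0 - (p₂ : M2) 0 0) * a 1 1 - (-((p₂ : M2) 0 1)) * a 1 0 +
        (-((p₁ : M2) 1 0)) * a 0 1) • (ej (bB 1) * (ej (bB 2) * ej (bB 3))) := by
  rw [eL_val]
  conv_lhs => rw [hexp a]
  simp only [map_add, map_smul]
  simp only [mul_add, add_mul, smul_mul_assoc, mul_smul_comm, smul_smul]
  simp only [tdup1, tdup2, smul_zero, add_zero, zero_add]
  simp only [t2 (bB 0) (bB 1) (bB 2), t2 (bB 0) (bB 1) (bB 3), t2 (bB 0) (bB 2) (bB 3),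
    t2 (bB 1) (bB 2) (bB 3), t3 (bB 0) (bB 1) (bB 2), t3 (bB 0) (bB 1) (bB 3),
    t3 (bB 0) (bB 2) (bB 3), t3 (bB 1) (bB 2) (bB 3),
    mul_assoc (ej (bB 0)) (ej (bB 1)) (ej (bB 2)), mul_assoc (ej (bB 0)) (ej (bB 1)) (ej (bB 3)),
    mul_assoc (ej (bB 0)) (ej (bB 2)) (ej (bB 3)), mul_assoc (ej (bB 1)) (ej (bB 2)) (ej (bB 3))]
  simp only [smul_neg]
  module


lemma mem_sl2C (m : M2) (h : m 0 0 + m 1 1 = 0) : m ∈ sl2C := by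
  simp only [sl2C, LinearMap.mem_ker, Matrix.traceLinearMap_apply, Matrix.trace_fin_two]
  exact h

lemma trace_rel (p : sl2C) : (p : M2) 1 1 = -((p : M2) 0 0) := by
  have h := p.2
  simp only [sl2C, LinearMap.mem_ker, Matrix.traceLinearMap_apply, Matrix.trace_fin_two] at h
  linear_combination h

lemma eL_inj : Function.Injective eL := by
  rw [← LinearMap.ker_eq_bot, LinearMap.ker_eq_bot']
  rintro ⟨p₁, p₂⟩ hP
  have hv : ((eL (p₁, p₂) : (⋀[ℂ]^2 M2 : Submodule ℂ (ExteriorAlgebra ℂ M2))) :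
      ExteriorAlgebra ℂ M2) = 0 := by rw [hP]; rfl
  have h0 := key2 p₁ p₂ (bB 0)
  have h1 := key2 p₁ p₂ (bB 1)
  have h3 := key2 p₁ p₂ (bB 3)
  rw [hv, zero_mul] at h0 h1 h3
  obtain ⟨e1, e2, e3, -⟩ := indep3 _ _ _ _ h0.symm
  obtain ⟨f1, f2, -, f4⟩ := indep3 _ _ _ _ h1.symm
  obtain ⟨-, g2, g3, g4⟩ := indep3 _ _ _ _ h3.symm
  norm_num [hb0] at e1 e2 e3
  norm_num [hb1] at f1 f2 f4
  norm_num [hb3] at g2 g3 g4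
  have hx1 : (p₁ : M2) 0 0 = 0 := by linear_combination (e1 + f2) / 2
  have hy1 : (p₂ : M2) 0 0 = 0 := by linear_combination (f2 - e1) / 2
  rw [Prod.mk_eq_zero]
  constructor <;> rw [← Submodule.coe_eq_zero] <;> ext i j <;> fin_cases i <;> fin_cases j
  · simpa using hx1
  · simpa using g2
  · simpa using f4
  · simp only [Matrix.zero_apply]
    show (p₁ : M2) 1 1 = 0
    rw [trace_rel p₁, hx1, neg_zero]
  · simpa using hy1
  · simpa using e2
  · simpa using f1
  · simp only [Matrix.zero_apply]
    show (p₂ : M2) 1 1 = 0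
    rw [trace_rel p₂, hy1, neg_zero]

noncomputable def SS : Submodule ℂ (ExteriorAlgebra ℂ M2) :=
  LinearMap.range ((Submodule.subtype _).comp eL)

lemma pre01 : ((eL (⟨!![0,1;0,0], mem_sl2C _ (by norm_num)⟩, 0) :
    (⋀[ℂ]^2 M2 : Submodule ℂ (ExteriorAlgebra ℂ M2))) : ExteriorAlgebra ℂ M2) =
    ej (bB 0) * ej (bB 1) := by
  rw [eL_val]; norm_num

lemma pre02 : ((eL (0, ⟨!![0,0;1,0], mem_sl2C _ (by norm_num)⟩) :
    (⋀[ℂ]^2 M2 : Submodule ℂ (ExteriorAlgebra ℂ M2))) : ExteriorAlgebra ℂ M2) =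
    ej (bB 0) * ej (bB 2) := by
  rw [eL_val]; norm_num

lemma pre03 : ((eL (⟨!![-(1/2),0;0,1/2], mem_sl2C _ (by norm_num)⟩,
    ⟨!![-(1/2),0;0,1/2], mem_sl2C _ (by norm_num)⟩) :
    (⋀[ℂ]^2 M2 : Submodule ℂ (ExteriorAlgebra ℂ M2))) : ExteriorAlgebra ℂ M2) =
    ej (bB 0) * ej (bB 3) := by
  rw [eL_val]; norm_num

lemma pre12 : ((eL (⟨!![1/2,0;0,-(1/2)], mem_sl2C _ (by norm_num)⟩,
    ⟨!![-(1/2),0;0,1/2], mem_sl2C _ (by norm_num)⟩) :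
    (⋀[ℂ]^2 M2 : Submodule ℂ (ExteriorAlgebra ℂ M2))) : ExteriorAlgebra ℂ M2) =
    ej (bB 1) * ej (bB 2) := by
  rw [eL_val]; norm_num

lemma pre13 : ((eL (0, ⟨!![0,-1;0,0], mem_sl2C _ (by norm_num)⟩) :
    (⋀[ℂ]^2 M2 : Submodule ℂ (ExteriorAlgebra ℂ M2))) : ExteriorAlgebra ℂ M2) =
    ej (bB 1) * ej (bB 3) := by
  rw [eL_val]; norm_num

lemma pre23 : ((eL (⟨!![0,0;-1,0], mem_sl2C _ (by norm_num)⟩, 0) :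
    (⋀[ℂ]^2 M2 : Submodule ℂ (ExteriorAlgebra ℂ M2))) : ExteriorAlgebra ℂ M2) =
    ej (bB 2) * ej (bB 3) := by
  rw [eL_val]; norm_num

lemma mem_SS_of_eq {v : ExteriorAlgebra ℂ M2} {P : sl2C × sl2C}
    (h : ((eL P : (⋀[ℂ]^2 M2 : Submodule ℂ (ExteriorAlgebra ℂ M2))) :
      ExteriorAlgebra ℂ M2) = v) : v ∈ SS :=
  ⟨P, h⟩

lemma neg_mem_SS_of_eq {v : ExteriorAlgebra ℂ M2} {P : sl2C × sl2C}
    (h : ((eL P : (⋀[ℂ]^2 M2 : Submodule ℂ (ExteriorAlgebra ℂ M2))) :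
      ExteriorAlgebra ℂ M2) = -v) : v ∈ SS := by
  have := Submodule.neg_mem SS (mem_SS_of_eq h)
  simpa using this

lemma hgen : ∀ i j : Fin 4, ej (bB i) * ej (bB j) ∈ SS := by
  intro i j
  fin_cases i <;> fin_cases j
  · rw [ι_sq_zero]; exact Submodule.zero_mem _
  · exact mem_SS_of_eq pre01
  · exact mem_SS_of_eq pre02
  · exact mem_SS_of_eq pre03
  · rw [swap]; exact Submodule.neg_mem _ (mem_SS_of_eq pre01)
  · rw [ι_sq_zero]; exact Submodule.zero_mem _
  · exact mem_SS_of_eq pre12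
  · exact mem_SS_of_eq pre13
  · rw [swap]; exact Submodule.neg_mem _ (mem_SS_of_eq pre02)
  · rw [swap]; exact Submodule.neg_mem _ (mem_SS_of_eq pre12)
  · rw [ι_sq_zero]; exact Submodule.zero_mem _
  · exact mem_SS_of_eq pre23
  · rw [swap]; exact Submodule.neg_mem _ (mem_SS_of_eq pre03)
  · rw [swap]; exact Submodule.neg_mem _ (mem_SS_of_eq pre13)
  · rw [swap]; exact Submodule.neg_mem _ (mem_SS_of_eq pre23)
  · rw [ι_sq_zero]; exact Submodule.zero_mem _

lemma hprod (a b : M2) : ej a * ej b ∈ SS := by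
  rw [hexp a, hexp b]
  simp only [map_add, map_smul]
  simp only [mul_add, add_mul, smul_add, smul_mul_assoc, mul_smul_comm, smul_smul]
  repeat'
    first
      | exact Submodule.smul_mem _ _ (hgen _ _)
      | apply Submodule.add_mem

lemma eL_surj : Function.Surjective eL := by
  intro z
  have hle : (⋀[ℂ]^2 M2 : Submodule ℂ (ExteriorAlgebra ℂ M2)) ≤ SS := by
    have h2 : (⋀[ℂ]^2 M2 : Submodule ℂ (ExteriorAlgebra ℂ M2)) =
        LinearMap.range (ι ℂ : M2 →ₗ[ℂ] ExteriorAlgebra ℂ M2) *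
        LinearMap.range (ι ℂ : M2 →ₗ[ℂ] ExteriorAlgebra ℂ M2) := by
      rw [exteriorPower, pow_two]
    rw [h2]
    rw [Submodule.mul_le]
    rintro x ⟨a, rfl⟩ y ⟨b, rfl⟩
    exact hprod a b
  obtain ⟨P, hP⟩ := hle z.2
  exact ⟨P, Subtype.ext hP⟩

/-- With `H = Hom(S₂,S₁)` (modelled by 2×2 matrices), under a suitable
linear identification `e` of `End₀(S₁) ⊕ End₀(S₂)` with `Λ²H`, the locus
`{(p₁,p₂,a) : a p₂ = p₁ a, det p₁ = det p₂}` corresponds to the locus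
`{(p,a) : p ∧ p = 0, p ∧ a = 0}` in `Λ²H × H`. -/
theorem stmt3 :
    ∃ e : (sl2C × sl2C) ≃ₗ[ℂ] (⋀[ℂ]^2 (Matrix (Fin 2) (Fin 2) ℂ) :
        Submodule ℂ (ExteriorAlgebra ℂ (Matrix (Fin 2) (Fin 2) ℂ))),
      ∀ (p₁ p₂ : sl2C) (a : Matrix (Fin 2) (Fin 2) ℂ),
        ((a * (p₂ : Matrix (Fin 2) (Fin 2) ℂ) = (p₁ : Matrix (Fin 2) (Fin 2) ℂ) * a) ∧
          (p₁ : Matrix (Fin 2) (Fin 2) ℂ).det = (p₂ : Matrix (Fin 2) (Fin 2) ℂ).det)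
        ↔
        ((e (p₁, p₂) : ExteriorAlgebra ℂ (Matrix (Fin 2) (Fin 2) ℂ)) *
            (e (p₁, p₂) : ExteriorAlgebra ℂ (Matrix (Fin 2) (Fin 2) ℂ)) = 0 ∧
          (e (p₁, p₂) : ExteriorAlgebra ℂ (Matrix (Fin 2) (Fin 2) ℂ)) * ι ℂ a = 0) := by
  refine ⟨LinearEquiv.ofBijective eL ⟨eL_inj, eL_surj⟩, ?_⟩
  intro p₁ p₂ a
  have hcoe : ((LinearEquiv.ofBijective eL ⟨eL_inj, eL_surj⟩ (p₁, p₂) :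
      (⋀[ℂ]^2 M2 : Submodule ℂ (ExteriorAlgebra ℂ M2))) : ExteriorAlgebra ℂ M2) =
      ((eL (p₁, p₂) : (⋀[ℂ]^2 M2 : Submodule ℂ (ExteriorAlgebra ℂ M2))) :
        ExteriorAlgebra ℂ M2) := rfl
  rw [hcoe]
  have ht1 := trace_rel p₁
  have ht2 := trace_rel p₂
  constructor
  · rintro ⟨h1, h2⟩
    have h00 : (a * (p₂ : M2)) 0 0 = ((p₁ : M2) * a) 0 0 := by rw [h1]
    have h01 : (a * (p₂ : M2)) 0 1 = ((p₁ : M2) * a) 0 1 := by rw [h1]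
    have h10 : (a * (p₂ : M2)) 1 0 = ((p₁ : M2) * a) 1 0 := by rw [h1]
    have h11 : (a * (p₂ : M2)) 1 1 = ((p₁ : M2) * a) 1 1 := by rw [h1]
    simp only [Matrix.mul_apply, Fin.sum_univ_two] at h00 h01 h10 h11
    rw [Matrix.det_fin_two, Matrix.det_fin_two] at h2
    constructor
    · rw [key1]
      have hs : (2 * ((p₂ : M2) 0 0 * (p₂ : M2) 0 0 + (p₂ : M2) 0 1 * (p₂ : M2) 1 0 -
          (p₁ : M2) 0 0 * (p₁ : M2) 0 0 - (p₁ : M2) 0 1 * (p₁ : M2) 1 0)) = 0 := by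
        linear_combination 2 * h2 - 2 * (p₁ : M2) 0 0 * ht1 + 2 * (p₂ : M2) 0 0 * ht2
      rw [hs, zero_smul]
    · rw [key2]
      have hA : ((p₁ : M2) 0 1 * a 1 0 - (p₂ : M2) 1 0 * a 0 1 +
          ((p₁ : M2) 0 0 - (p₂ : M2) 0 0) * a 0 0) = 0 := by linear_combination -h00
      have hB : ((p₁ : M2) 0 1 * a 1 1 - (-((p₁ : M2) 0 0) - (p₂ : M2) 0 0) * a 0 1 +
          (-((p₂ : M2) 0 1)) * a 0 0) = 0 := by linear_combination -h01 + a 0 1 * ht2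
      have hC : ((p₂ : M2) 1 0 * a 1 1 - (-((p₁ : M2) 0 0) - (p₂ : M2) 0 0) * a 1 0 +
          (-((p₁ : M2) 1 0)) * a 0 0) = 0 := by linear_combination h10 + a 1 0 * ht1
      have hD : (((p₁ : M2) 0 0 - (p₂ : M2) 0 0) * a 1 1 - (-((p₂ : M2) 0 1)) * a 1 0 +
          (-((p₁ : M2) 1 0)) * a 0 1) = 0 := by
        linear_combination h11 + a 1 1 * ht1 - a 1 1 * ht2
      rw [hA, hB, hC, hD]
      simp
  · rintro ⟨hq, ha⟩
    rw [key1] at hq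
    rw [key2] at ha
    have hs : (2 * ((p₂ : M2) 0 0 * (p₂ : M2) 0 0 + (p₂ : M2) 0 1 * (p₂ : M2) 1 0 -
        (p₁ : M2) 0 0 * (p₁ : M2) 0 0 - (p₁ : M2) 0 1 * (p₁ : M2) 1 0)) = 0 := by
      rcases smul_eq_zero.mp hq with h | h
      · exact h
      · exact absurd h Wne
    obtain ⟨hA, hB, hC, hD⟩ := indep3 _ _ _ _ ha
    constructor
    · ext i j
      fin_cases i <;> fin_cases j <;>
        simp only [Matrix.mul_apply, Fin.sum_univ_two, Fin.mk_zero, Fin.mk_one, Fin.isValue]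
      · linear_combination -hA
      · linear_combination -hB + a 0 1 * ht2
      · linear_combination hC - a 1 0 * ht1
      · linear_combination hD - a 1 1 * ht1 + a 1 1 * ht2
    · rw [Matrix.det_fin_two, Matrix.det_fin_two]
      linear_combination hs / 2 + (p₁ : M2) 0 0 * ht1 - (p₂ : M2) 0 0 * ht2
end

section
/- Let S, V be complex vector spaces with dim S = 2, dim V = n > 2. On the total space E₊ of the bundle Hom(V,S) ⊕ End(S) over Gr(2,V) (with tautological subbundle S), the function W = Tr(p ∘ y ∘ x), where x is the tautological inclusion S ↪ V, has critical locus contained in the zero locus {y ∘ x = 0}, which is isomorphic to the cotangent bundle T*Gr(2,V) = Hom(V/S, S) over Gr(2,V). -/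
attribute [local instance] Matrix.normedAddCommGroup Matrix.normedSpace

/-- On the total space `E₊` of `Hom(V,S) ⊕ End(S)` over `Gr(2,V)`
(points with chosen basis: `x : S → V` injective, `y : V → S`, `p : End S`), the
function `W = Tr(p ∘ y ∘ x)` has critical locus contained in `{y ∘ x = 0}`; and for
each fixed injective `x`, the fibre `{y : y ∘ x = 0}` of the zero locus is linearly
isomorphic to `Hom(V/S, S)`, the fibre of the cotangent bundle `T*Gr(2,V)`. -/
theorem stmt14 (n : ℕ) (hn : 2 < n) :
    (∀ x : Matrix (Fin n) (Fin 2) ℂ, ∀ y : Matrix (Fin 2) (Fin n) ℂ,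
      ∀ p : Matrix (Fin 2) (Fin 2) ℂ,
      Function.Injective x.mulVecLin →
      fderiv ℂ (fun t : Matrix (Fin n) (Fin 2) ℂ × Matrix (Fin 2) (Fin n) ℂ ×
          Matrix (Fin 2) (Fin 2) ℂ => (t.2.2 * t.2.1 * t.1).trace) (x, y, p) = 0 →
      y * x = 0) ∧
    (∀ x : Matrix (Fin n) (Fin 2) ℂ, Function.Injective x.mulVecLin →
      ∃ φ : (((Fin n → ℂ) ⧸ LinearMap.range x.mulVecLin) →ₗ[ℂ] (Fin 2 → ℂ)) →ₗ[ℂ]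
          Matrix (Fin 2) (Fin n) ℂ,
        Function.Injective φ ∧
        ∀ y : Matrix (Fin 2) (Fin n) ℂ, (y * x = 0 ↔ y ∈ Set.range φ)) := by
  constructor
  · intro x y p _hx hcrit
    set f : Matrix (Fin n) (Fin 2) ℂ × Matrix (Fin 2) (Fin n) ℂ ×
        Matrix (Fin 2) (Fin 2) ℂ → ℂ :=
      fun t => (t.2.2 * t.2.1 * t.1).trace with hf
    have hdiff : Differentiable ℂ f := by
      have : f = fun t => ∑ i, ∑ k, ∑ j, t.2.2 i j * t.2.1 j k * t.1 k i := by
        funext t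
        simp [hf, Matrix.trace, Matrix.mul_apply, Matrix.diag, Finset.sum_mul, add_mul]
      rw [this]; fun_prop
    let ι : Matrix (Fin 2) (Fin 2) ℂ →L[ℂ]
        Matrix (Fin n) (Fin 2) ℂ × Matrix (Fin 2) (Fin n) ℂ × Matrix (Fin 2) (Fin 2) ℂ :=
      (0 : Matrix (Fin 2) (Fin 2) ℂ →L[ℂ] Matrix (Fin n) (Fin 2) ℂ).prod
        ((0 : Matrix (Fin 2) (Fin 2) ℂ →L[ℂ] Matrix (Fin 2) (Fin n) ℂ).prod
          (ContinuousLinearMap.id ℂ _))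
    have hψ : HasFDerivAt (fun q : Matrix (Fin 2) (Fin 2) ℂ => ((x, y, p + q) :
        Matrix (Fin n) (Fin 2) ℂ × Matrix (Fin 2) (Fin n) ℂ × Matrix (Fin 2) (Fin 2) ℂ))
        ι 0 := by
      apply (hasFDerivAt_const x 0).prodMk
      apply (hasFDerivAt_const y 0).prodMk
      simpa using (hasFDerivAt_id (0 : Matrix (Fin 2) (Fin 2) ℂ)).const_add p
    have hfd : HasFDerivAt f (fderiv ℂ f (x, y, p)) (x, y, p + 0) := by
      simpa using (hdiff (x, y, p)).hasFDerivAt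
    have hcomp := hfd.comp 0 hψ
    rw [hcrit] at hcomp
    simp only [ContinuousLinearMap.zero_comp, Function.comp_def] at hcomp
    let L : Matrix (Fin 2) (Fin 2) ℂ →ₗ[ℂ] ℂ :=
      (Matrix.traceLinearMap (Fin 2) ℂ ℂ).comp (LinearMap.mulRight ℂ (y * x))
    have heq : (fun q : Matrix (Fin 2) (Fin 2) ℂ => f (x, y, p + q))
        = fun q => (p * y * x).trace + L.toContinuousLinearMap q := by
      funext q
      show ((p + q) * y * x).trace = (p * y * x).trace + (q * (y * x)).trace
      rw [Matrix.add_mul, Matrix.add_mul, Matrix.trace_add, Matrix.mul_assoc q y x]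
    rw [heq] at hcomp
    have hL : L.toContinuousLinearMap = 0 :=
      (L.toContinuousLinearMap.hasFDerivAt.const_add ((p * y * x).trace)).unique hcomp
    have hL0 : ∀ q : Matrix (Fin 2) (Fin 2) ℂ, (q * (y * x)).trace = 0 := by
      intro q
      have := congrArg (fun T => T q) (congrArg DFunLike.coe hL)
      simpa [L] using this
    ext i j
    have key : (Matrix.single j i 1 * (y * x)).trace = (y * x) i j := by
      simp [Matrix.trace, Matrix.diag, Matrix.mul_apply, Matrix.single,
        Finset.sum_ite_eq, ite_and]
    have := hL0 (Matrix.single j i 1)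
    rw [key] at this
    simpa using this
  · intro x hx
    set R := LinearMap.range x.mulVecLin with hR
    let φ : (((Fin n → ℂ) ⧸ R) →ₗ[ℂ] (Fin 2 → ℂ)) →ₗ[ℂ] Matrix (Fin 2) (Fin n) ℂ :=
      (LinearMap.toMatrix' : ((Fin n → ℂ) →ₗ[ℂ] (Fin 2 → ℂ)) ≃ₗ[ℂ]
          Matrix (Fin 2) (Fin n) ℂ).toLinearMap ∘ₗ
        R.mkQ.lcomp ℂ (Fin 2 → ℂ)
    have hφ : ∀ g, φ g = LinearMap.toMatrix' (g ∘ₗ R.mkQ) := fun g => rfl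
    refine ⟨φ, ?_, ?_⟩
    · intro f g hfg
      have h1 : f ∘ₗ R.mkQ = g ∘ₗ R.mkQ := by
        have := congrArg LinearMap.toMatrix'.symm (hφ f ▸ hφ g ▸ hfg)
        simpa using this
      refine LinearMap.ext fun v => ?_
      obtain ⟨w, rfl⟩ := R.mkQ_surjective v
      simpa using LinearMap.congr_fun h1 w
    · intro y
      constructor
      · intro hyx
        have hle : R ≤ LinearMap.ker y.mulVecLin := by
          rintro v ⟨w, rfl⟩
          have : (y * x).mulVecLin w = 0 := by rw [hyx]; simp
          simpa [Matrix.mulVecLin_mul] using this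
        refine ⟨R.liftQ y.mulVecLin hle, ?_⟩
        rw [hφ, R.liftQ_mkQ, ← Matrix.toLin'_apply', LinearMap.toMatrix'_toLin']
      · rintro ⟨f, rfl⟩
        have h1 : (φ f).mulVecLin = f ∘ₗ R.mkQ := by
          rw [hφ, ← Matrix.toLin'_apply', Matrix.toLin'_toMatrix']
        have h2 : (φ f * x).mulVecLin = 0 := by
          rw [Matrix.mulVecLin_mul, h1]
          refine LinearMap.ext fun w => ?_
          have hz : (Submodule.Quotient.mk (x.mulVec w) : (Fin n → ℂ) ⧸ R) = 0 := by
            rw [Submodule.Quotient.mk_eq_zero]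
            exact ⟨w, by simp [Matrix.mulVecLin_apply]⟩
          simp [LinearMap.comp_apply, Submodule.mkQ_apply, Matrix.mulVecLin_apply, hz]
        calc φ f * x = LinearMap.toMatrix' ((φ f * x).mulVecLin) := by
              rw [← Matrix.toLin'_apply', LinearMap.toMatrix'_toLin']
          _ = 0 := by rw [h2]; simp
end

section
/- Let V be an n-dimensional complex vector space and consider triples (x₁, y₂, a) where x₁: S₁ ↪ V is injective, y₂: V ↠ S₂ is surjective, a: S₂ → S₁, with dim S₁ = dim S₂ = 2. Setting y₁ = a∘y₂ and x₂ = x₁∘a, the resulting map from this space of triples into Hom(S₁,V) ⊕ Hom(V,S₁) ⊕ Hom(S₂,V) ⊕ Hom(V,S₂) modulo the group actions is a closed embedding of the correspondence into F₊ × ℱ; moreover the locus where y₂ is surjective and a is an isomorphism is exactly the graph of the canonical birational identification (the diagonal Δ_F). -/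
noncomputable section

variable (n : ℕ)

/-- Triples `(x₁ : S₁ ↪ V, y₂ : V ↠ S₂, a : S₂ → S₁)` (the correspondence `F̃`),
with `dim S₁ = dim S₂ = 2`, `dim V = n`. -/
abbrev Triple := Matrix (Fin n) (Fin 2) ℂ × Matrix (Fin 2) (Fin n) ℂ ×
  Matrix (Fin 2) (Fin 2) ℂ

/-- Quadruples `(x₁, y₁, x₂, y₂)` representing a point of `F₊ × ℱ`. -/
abbrev Quad := Matrix (Fin n) (Fin 2) ℂ × Matrix (Fin 2) (Fin n) ℂ ×
  Matrix (Fin n) (Fin 2) ℂ × Matrix (Fin 2) (Fin n) ℂ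

/-- The map `(x₁, y₂, a) ↦ (x₁, a∘y₂, x₁∘a, y₂)` into `F₊ × ℱ`. -/
def Phi (t : Triple n) : Quad n := (t.1, t.2.2 * t.2.1, t.1 * t.2.2, t.2.1)

/-- The locus of the correspondence: `x₁` injective and `y₂` surjective. -/
def Dom : Set (Triple n) :=
  {t | Function.Injective t.1.mulVecLin ∧ Function.Surjective t.2.1.mulVecLin}

/-- Matrices are determined by their action on vectors. -/
lemma mulVec_ext {m k : ℕ} {A B : Matrix (Fin m) (Fin k) ℂ}
    (h : ∀ v, A.mulVec v = B.mulVec v) : A = B :=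
  Matrix.toLin'.injective (LinearMap.ext h)

/-- Left cancellation by an "injective" matrix. -/
lemma left_cancel {m k : ℕ} {A : Matrix (Fin m) (Fin k) ℂ}
    (hA : Function.Injective A.mulVecLin) {l : ℕ}
    {M N : Matrix (Fin k) (Fin l) ℂ} (h : A * M = A * N) : M = N := by
  apply mulVec_ext
  intro v
  apply hA
  show A.mulVec (M.mulVec v) = A.mulVec (N.mulVec v)
  rw [Matrix.mulVec_mulVec, Matrix.mulVec_mulVec, h]

/-- An injective matrix has a left inverse matrix. -/
lemma exists_left_inv {m k : ℕ} {A : Matrix (Fin m) (Fin k) ℂ}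
    (hA : Function.Injective A.mulVecLin) :
    ∃ L : Matrix (Fin k) (Fin m) ℂ, L * A = 1 := by
  obtain ⟨g, hg⟩ := A.mulVecLin.exists_leftInverse_of_injective
    (LinearMap.ker_eq_bot.mpr hA)
  refine ⟨LinearMap.toMatrix' g, ?_⟩
  apply mulVec_ext
  intro v
  have h1 : (LinearMap.toMatrix' g).mulVec (A.mulVec v) = g (A.mulVec v) := by
    have h2 := Matrix.toLin'_toMatrix' g
    calc (LinearMap.toMatrix' g).mulVec (A.mulVec v)
        = Matrix.toLin' (LinearMap.toMatrix' g) (A.mulVec v) := rfl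
      _ = g (A.mulVec v) := by rw [h2]
  calc (LinearMap.toMatrix' g * A).mulVec v
      = (LinearMap.toMatrix' g).mulVec (A.mulVec v) := by rw [Matrix.mulVec_mulVec]
    _ = g (A.mulVecLin v) := h1
    _ = (g.comp A.mulVecLin) v := rfl
    _ = v := by rw [hg]; rfl
    _ = (1 : Matrix (Fin k) (Fin k) ℂ).mulVec v := by rw [Matrix.one_mulVec]

/-- the map `(x₁,y₂,a) ↦ (x₁, a y₂, x₁ a, y₂)`, modulo the actions of
`GL(S₁) × GL(S₂)`, is a closed embedding of the correspondence into `F₊ × ℱ`: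
it is injective on orbits and its image is closed in the relevant locus. Moreover the
locus where `a` is an isomorphism is exactly the graph `Δ_F` of the canonical
birational identification. -/
theorem stmt18 (hn : 2 < n) :
    -- injectivity on GL(S₁) × GL(S₂)-orbits
    (∀ t ∈ Dom n, ∀ t' ∈ Dom n,
      (∃ g₁ g₂ : Matrix.GeneralLinearGroup (Fin 2) ℂ,
        Phi n t' = ((Phi n t).1 * (↑g₁⁻¹ : Matrix (Fin 2) (Fin 2) ℂ),
          (↑g₁ : Matrix (Fin 2) (Fin 2) ℂ) * (Phi n t).2.1,
          (Phi n t).2.2.1 * (↑g₂⁻¹ : Matrix (Fin 2) (Fin 2) ℂ),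
          (↑g₂ : Matrix (Fin 2) (Fin 2) ℂ) * (Phi n t).2.2.2)) →
      ∃ g₁ g₂ : Matrix.GeneralLinearGroup (Fin 2) ℂ,
        t' = (t.1 * (↑g₁⁻¹ : Matrix (Fin 2) (Fin 2) ℂ),
          (↑g₂ : Matrix (Fin 2) (Fin 2) ℂ) * t.2.1,
          (↑g₁ : Matrix (Fin 2) (Fin 2) ℂ) * t.2.2 *
            (↑g₂⁻¹ : Matrix (Fin 2) (Fin 2) ℂ))) ∧
    -- the image is closed in the locus where x₁ is injective and y₂ is surjective
    (∀ q ∈ closure (Phi n '' Dom n),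
      Function.Injective q.1.mulVecLin → Function.Surjective q.2.2.2.mulVecLin →
      q ∈ Phi n '' Dom n) ∧
    -- the locus where a is invertible is exactly the graph of the birational map
    (∀ t ∈ Dom n,
      ((∃ g : Matrix.GeneralLinearGroup (Fin 2) ℂ,
          (Phi n t).2.2.1 = (Phi n t).1 * (↑g : Matrix (Fin 2) (Fin 2) ℂ) ∧
          (Phi n t).2.1 = (↑g : Matrix (Fin 2) (Fin 2) ℂ) * (Phi n t).2.2.2)
        ↔ IsUnit t.2.2)) := by
  refine ⟨?_, ?_, ?_⟩
  · -- injectivity on orbits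
    rintro ⟨x₁, y₂, a⟩ ⟨hx, hy⟩ ⟨x₁', y₂', a'⟩ _ ⟨g₁, g₂, heq⟩
    simp only [Phi, Prod.mk.injEq] at heq
    obtain ⟨h1, h2, h3, h4⟩ := heq
    refine ⟨g₁, g₂, ?_⟩
    simp only [Prod.mk.injEq]
    refine ⟨h1, h4, ?_⟩
    have key : x₁ * ((↑g₁⁻¹ : Matrix (Fin 2) (Fin 2) ℂ) * a')
        = x₁ * (a * (↑g₂⁻¹ : Matrix (Fin 2) (Fin 2) ℂ)) := by
      rw [← Matrix.mul_assoc, ← h1, h3, Matrix.mul_assoc]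
    have hc := left_cancel hx key
    calc a' = ((↑g₁ : Matrix (Fin 2) (Fin 2) ℂ) * ↑g₁⁻¹) * a' := by
              rw [show (↑g₁ : Matrix (Fin 2) (Fin 2) ℂ) * ↑g₁⁻¹ = 1 from g₁.mul_inv,
                Matrix.one_mul]
      _ = (↑g₁ : Matrix (Fin 2) (Fin 2) ℂ) * ((↑g₁⁻¹ : Matrix (Fin 2) (Fin 2) ℂ) * a') := by
              rw [Matrix.mul_assoc]
      _ = (↑g₁ : Matrix (Fin 2) (Fin 2) ℂ) * (a * (↑g₂⁻¹ : Matrix (Fin 2) (Fin 2) ℂ)) := by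
              rw [hc]
      _ = (↑g₁ : Matrix (Fin 2) (Fin 2) ℂ) * a * (↑g₂⁻¹ : Matrix (Fin 2) (Fin 2) ℂ) := by
              rw [Matrix.mul_assoc]
  · -- closedness in the relevant locus
    intro q hq hinj hsurj
    have hC : IsClosed {q : Quad n | q.1 * q.2.1 = q.2.2.1 * q.2.2.2} := by
      apply isClosed_eq
      · exact continuous_fst.matrix_mul continuous_snd.fst
      · exact continuous_snd.snd.fst.matrix_mul continuous_snd.snd.snd
    have hsub : Phi n '' Dom n ⊆ {q : Quad n | q.1 * q.2.1 = q.2.2.1 * q.2.2.2} := by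
      rintro _ ⟨⟨x₁, y₂, a⟩, _, rfl⟩
      show x₁ * (a * y₂) = (x₁ * a) * y₂
      rw [Matrix.mul_assoc]
    have hrel : q.1 * q.2.1 = q.2.2.1 * q.2.2.2 :=
      (closure_minimal hsub hC) hq
    obtain ⟨x₁, y₁, x₂, y₂⟩ := q
    simp only at hrel hinj hsurj
    obtain ⟨L, hL⟩ := exists_left_inv hinj
    refine ⟨(x₁, y₂, L * x₂), ⟨hinj, hsurj⟩, ?_⟩
    have hy : (L * x₂) * y₂ = y₁ := by
      rw [Matrix.mul_assoc, ← hrel, ← Matrix.mul_assoc, hL, Matrix.one_mul]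
    have hx : x₁ * (L * x₂) = x₂ := by
      apply mulVec_ext
      intro v
      obtain ⟨w, hw⟩ := hsurj v
      have hwv : y₂.mulVec w = v := hw
      have h1 : x₂.mulVec v = x₁.mulVec (y₁.mulVec w) := by
        rw [← hwv, Matrix.mulVec_mulVec, ← hrel, ← Matrix.mulVec_mulVec]
      have h3 : L.mulVec (x₁.mulVec (y₁.mulVec w)) = y₁.mulVec w := by
        rw [Matrix.mulVec_mulVec, hL, Matrix.one_mulVec]
      have h2 : (x₁ * (L * x₂)).mulVec v = x₁.mulVec (y₁.mulVec w) := by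
        rw [← Matrix.mulVec_mulVec, ← Matrix.mulVec_mulVec, h1, h3]
      rw [h1, h2]
    show (x₁, (L * x₂) * y₂, x₁ * (L * x₂), y₂) = (x₁, y₁, x₂, y₂)
    rw [hy, hx]
  · -- locus where a is invertible
    rintro ⟨x₁, y₂, a⟩ ⟨hx, hy⟩
    simp only [Phi]
    constructor
    · rintro ⟨g, hg1, hg2⟩
      have ha : a = (↑g : Matrix (Fin 2) (Fin 2) ℂ) := left_cancel hx hg1
      rw [ha]
      exact g.isUnit
    · intro ha
      obtain ⟨u, hu⟩ := ha
      exact ⟨u, by rw [hu], by rw [hu]⟩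

end
end
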